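/- Double integral lower bound in product coordinates: let n > r ≥ 1 be integers, s > 0 and δ > 0. There exists a constant C > 0, depending only on δ, n, r and s, such that for all y, y' in the open ball B^{n−r}_δ(0) ⊂ ℝ^{n−r} with y ≠ y', ∫_{B^r_{6δ}(0)} ∫_{B^r_{6δ}(0)} ( |x−x'|² + |y−y'|² )^{−(n+2s)/2} dx' dx ≥ C |y−y'|^{−(n−r+2s)}, where B^r_{6δ}(0) ⊂ ℝ^r is the open ball of radius 6δ centered at the origin. -/

import Mathlib

open MeasureTheory Filter Metric

/-- **Double integral lower bound in product coordinates.** -/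
theorem stmt_16 (n r : ℕ) (hr : 1 ≤ r) (hrn : r < n) (s δ : ℝ) (hs : 0 < s) (hδ : 0 < δ) :
    ∃ C > 0, ∀ y y' : EuclideanSpace ℝ (Fin (n - r)),
      y ∈ ball (0 : EuclideanSpace ℝ (Fin (n - r))) δ →
      y' ∈ ball (0 : EuclideanSpace ℝ (Fin (n - r))) δ → y ≠ y' →
        C * ‖y - y'‖ ^ (-((n : ℝ) - r + 2 * s)) ≤
          ∫ x in ball (0 : EuclideanSpace ℝ (Fin r)) (6 * δ),
            ∫ x' in ball (0 : EuclideanSpace ℝ (Fin r)) (6 * δ),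
              (‖x - x'‖ ^ 2 + ‖y - y'‖ ^ 2) ^ (-((n : ℝ) + 2 * s) / 2) := by
  classical
  set E := EuclideanSpace ℝ (Fin r)
  set p : ℝ := -((n : ℝ) + 2 * s) / 2 with hp
  have hn0 : (0 : ℝ) < (n : ℝ) + 2 * s := by positivity
  have hple : p ≤ 0 := by
    rw [hp]; nlinarith
  haveI : Nontrivial E := by
    have : 0 < Module.finrank ℝ E := by simp [E]; omega
    exact Module.nontrivial_of_finrank_pos this
  set v : ℝ := (volume (ball (0 : E) 1)).toReal with hv
  have hrankE : Module.finrank ℝ E = r := by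
    simp [E]
  have hvpos : 0 < v := by
    rw [hv]
    apply ENNReal.toReal_pos
    · exact (measure_ball_pos volume (0 : E) one_pos).ne'
    · exact measure_ball_lt_top.ne
  have hvol : ∀ (x : E) (ρ : ℝ), 0 ≤ ρ →
      (volume (ball x ρ)).toReal = ρ ^ r * v := by
    intro x ρ hρ
    rw [Measure.addHaar_ball volume x hρ, hrankE, ENNReal.toReal_mul,
      ENNReal.toReal_ofReal (by positivity)]
  refine ⟨(3 * δ) ^ r * v ^ 2 * (2 : ℝ) ^ p, by positivity, ?_⟩
  intro y y' hy hy' hne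
  set t : ℝ := ‖y - y'‖ with htdef
  have ht : 0 < t := by
    simpa [htdef] using sub_ne_zero_of_ne hne
  have ht2 : t < 2 * δ := by
    have h1 : ‖y‖ < δ := by simpa using hy
    have h2 : ‖y'‖ < δ := by simpa using hy'
    calc t ≤ ‖y‖ + ‖y'‖ := norm_sub_le _ _
    _ < 2 * δ := by linarith
  set F : E → E → ℝ := fun x x' => (‖x - x'‖ ^ 2 + t ^ 2) ^ p with hF
  have hbasepos : ∀ x x' : E, (0 : ℝ) < ‖x - x'‖ ^ 2 + t ^ 2 := fun x x' => by positivity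
  have hFpos : ∀ x x' : E, 0 < F x x' := fun x x' =>
    Real.rpow_pos_of_pos (hbasepos x x') p
  have hFle : ∀ x x' : E, F x x' ≤ (t ^ 2) ^ p := by
    intro x x'
    exact Real.rpow_le_rpow_of_nonpos (by positivity) (by nlinarith [sq_nonneg ‖x - x'‖]) hple
  have hFcont : Continuous (fun z : E × E => F z.1 z.2) := by
    apply Continuous.rpow_const
    · exact (((continuous_fst.sub continuous_snd).norm.pow 2).add continuous_const)
    · intro z; exact Or.inl (hbasepos z.1 z.2).ne'
  -- integrability of F x · on the big ball, for every x
  have hFint : ∀ x : E, IntegrableOn (fun x' => F x x') (ball (0 : E) (6 * δ)) volume := by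
    intro x
    have hcx : Continuous fun x' : E => F x x' := by
      apply Continuous.rpow_const
      · exact (((continuous_const.sub continuous_id).norm.pow 2).add continuous_const)
      · intro x'; exact Or.inl (hbasepos x x').ne'
    refine Measure.integrableOn_of_bounded (M := (t ^ 2) ^ p) measure_ball_lt_top.ne
      hcx.aestronglyMeasurable (ae_of_all _ fun x' => ?_)
    rw [Real.norm_of_nonneg (hFpos x x').le]
    exact hFle x x'
  -- the inner integral is bounded below on the ball of radius 3δ
  have hc0 : ∀ x : E, x ∈ ball (0 : E) (3 * δ) →
      t ^ r * v * (2 * t ^ 2) ^ p ≤ ∫ x' in ball (0 : E) (6 * δ), F x x' := by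
    intro x hx
    have hxn : ‖x‖ < 3 * δ := by simpa using hx
    have hsub : ball x t ⊆ ball (0 : E) (6 * δ) := by
      intro z hz
      rw [mem_ball, dist_eq_norm] at hz
      rw [mem_ball, dist_zero_right]
      have h5 : ‖z‖ ≤ ‖z - x‖ + ‖x‖ := by
        simpa using norm_add_le (z - x) x
      linarith
    have step2 : (2 * t ^ 2) ^ p * (volume (ball x t)).toReal
        ≤ ∫ x' in ball x t, F x x' := by
      apply setIntegral_ge_of_const_le_real measurableSet_ball measure_ball_lt_top.ne
      · intro x' hx'
        have hd : ‖x - x'‖ < t := by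
          rw [← dist_eq_norm, dist_comm]
          simpa [dist_eq_norm] using hx'
        exact Real.rpow_le_rpow_of_nonpos (hbasepos x x')
          (by nlinarith [norm_nonneg (x - x')]) hple
      · exact (hFint x).mono_set hsub
    have step1 : ∫ x' in ball x t, F x x' ≤ ∫ x' in ball (0 : E) (6 * δ), F x x' := by
      apply setIntegral_mono_set (hFint x)
        (ae_of_all _ fun x' => (hFpos x x').le) (HasSubset.Subset.eventuallyLE hsub)
    calc t ^ r * v * (2 * t ^ 2) ^ p
        = (2 * t ^ 2) ^ p * (volume (ball x t)).toReal := by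
          rw [hvol x t ht.le]; ring
      _ ≤ ∫ x' in ball x t, F x x' := step2
      _ ≤ _ := step1
  -- integrability of the inner integral
  have hprodfin : IsFiniteMeasure ((volume.restrict (ball (0 : E) (6 * δ))).prod
      (volume.restrict (ball (0 : E) (6 * δ)))) := by
    have : Fact (volume (ball (0 : E) (6 * δ)) < ⊤) := ⟨measure_ball_lt_top⟩
    infer_instance
  have hFprod : Integrable (fun z : E × E => F z.1 z.2)
      ((volume.restrict (ball (0 : E) (6 * δ))).prod
        (volume.restrict (ball (0 : E) (6 * δ)))) := by
    refine ⟨hFcont.aestronglyMeasurable, ?_⟩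
    apply HasFiniteIntegral.of_bounded (C := (t ^ 2) ^ p)
    refine ae_of_all _ fun z => ?_
    rw [Real.norm_of_nonneg (hFpos z.1 z.2).le]
    exact hFle z.1 z.2
  have hinner : IntegrableOn (fun x => ∫ x' in ball (0 : E) (6 * δ), F x x')
      (ball (0 : E) (6 * δ)) volume := hFprod.integral_prod_left
  have hinnernn : ∀ x : E, 0 ≤ ∫ x' in ball (0 : E) (6 * δ), F x x' := fun x =>
    integral_nonneg fun x' => (hFpos x x').le
  -- outer bound
  have houter : (2 * t ^ 2) ^ p * t ^ r * v * ((3 * δ) ^ r * v) ≤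
      ∫ x in ball (0 : E) (6 * δ), ∫ x' in ball (0 : E) (6 * δ), F x x' := by
    have hsub3 : ball (0 : E) (3 * δ) ⊆ ball (0 : E) (6 * δ) :=
      ball_subset_ball (by linarith)
    calc (2 * t ^ 2) ^ p * t ^ r * v * ((3 * δ) ^ r * v)
        = (t ^ r * v * (2 * t ^ 2) ^ p) * (volume (ball (0 : E) (3 * δ))).toReal := by
          rw [hvol 0 (3 * δ) (by positivity)]; ring
      _ ≤ ∫ x in ball (0 : E) (3 * δ), ∫ x' in ball (0 : E) (6 * δ), F x x' :=
          setIntegral_ge_of_const_le_real measurableSet_ball measure_ball_lt_top.ne hc0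
            (hinner.mono_set hsub3)
      _ ≤ _ := setIntegral_mono_set hinner (ae_of_all _ hinnernn)
            (HasSubset.Subset.eventuallyLE hsub3)
  -- final algebra
  have hkey : (3 * δ) ^ r * v ^ 2 * (2 : ℝ) ^ p * t ^ (-((n : ℝ) - r + 2 * s))
      = (2 * t ^ 2) ^ p * t ^ r * v * ((3 * δ) ^ r * v) := by
    have h1 : (2 * t ^ 2) ^ p = (2 : ℝ) ^ p * (t ^ 2) ^ p :=
      Real.mul_rpow (by norm_num) (by positivity)
    have h2 : (t ^ 2 : ℝ) ^ p = t ^ (2 * p) := by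
      rw [← Real.rpow_natCast t 2, ← Real.rpow_mul ht.le]
      norm_num
    have h3 : (t : ℝ) ^ (r : ℕ) = t ^ (r : ℝ) := (Real.rpow_natCast t r).symm
    have h4 : t ^ (2 * p) * t ^ (r : ℝ) = t ^ (-((n : ℝ) - r + 2 * s)) := by
      rw [← Real.rpow_add ht]
      congr 1
      rw [hp]; ring
    rw [h1, h2, h3]
    calc (3 * δ) ^ r * v ^ 2 * (2 : ℝ) ^ p * t ^ (-((n : ℝ) - r + 2 * s))
        = (3 * δ) ^ r * v ^ 2 * (2 : ℝ) ^ p * (t ^ (2 * p) * t ^ (r : ℝ)) := by rw [h4]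
      _ = (2 : ℝ) ^ p * t ^ (2 * p) * t ^ (r : ℝ) * v * ((3 * δ) ^ r * v) := by ring
  rw [hkey]
  exact houter
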